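/- Consider logistic regression gradients g(x,y;w) = (sigmoid(wᵀx) - y)·x. Suppose x₂,…,xₙ all lie in a linear subspace Γ of ℝ^d, x₁ ∉ Γ, and sigmoid(wᵀx₁) ≠ y₁. Then min over 2 ≤ i ≤ n of ‖g(x₁,y₁;w) - g(xᵢ,yᵢ;w)‖ ≥ |sigmoid(wᵀx₁) - y₁| · dist(x₁, Γ) > 0. In particular no point xᵢ (i ≥ 2) produces the same gradient as x₁. -/

import Mathlib

noncomputable def sigmoid (t : ℝ) : ℝ := 1 / (1 + Real.exp (-t))

/-- Logistic regression gradient `g(x,y;w) = (σ(wᵀx) - y) • x`. -/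
noncomputable def logGrad {d : ℕ} (w x : EuclideanSpace ℝ (Fin d)) (y : ℝ) :
    EuclideanSpace ℝ (Fin d) :=
  (sigmoid ((inner ℝ w x : ℝ)) - y) • x

/-- If `x₂,…,xₙ` lie in a subspace `Γ`, `x₁ ∉ Γ`, and `σ(wᵀx₁) ≠ y₁`, then every
gradient difference `‖g(x₁,y₁;w) - g(xᵢ,yᵢ;w)‖` is at least
`|σ(wᵀx₁) - y₁| · dist(x₁, Γ) > 0`; in particular no `xᵢ` gives the same gradient. -/
theorem logistic_gradient_separation {d n : ℕ}
    (Γ : Submodule ℝ (EuclideanSpace ℝ (Fin d)))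
    (w x₁ : EuclideanSpace ℝ (Fin d)) (y₁ : ℝ)
    (xs : Fin n → EuclideanSpace ℝ (Fin d)) (ys : Fin n → ℝ)
    (hxs : ∀ i, xs i ∈ Γ) (hx₁ : x₁ ∉ Γ)
    (hy : sigmoid ((inner ℝ w x₁ : ℝ)) ≠ y₁) :
    (∀ i, |sigmoid ((inner ℝ w x₁ : ℝ)) - y₁| *
        Metric.infDist x₁ (Γ : Set (EuclideanSpace ℝ (Fin d)))
        ≤ ‖logGrad w x₁ y₁ - logGrad w (xs i) (ys i)‖) ∧
      0 < |sigmoid ((inner ℝ w x₁ : ℝ)) - y₁| *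
        Metric.infDist x₁ (Γ : Set (EuclideanSpace ℝ (Fin d))) ∧
      ∀ i, logGrad w (xs i) (ys i) ≠ logGrad w x₁ y₁ := by
  set c : ℝ := sigmoid ((inner ℝ w x₁ : ℝ)) - y₁ with hc
  have hc0 : c ≠ 0 := sub_ne_zero.mpr hy
  have hΓclosed : IsClosed (Γ : Set (EuclideanSpace ℝ (Fin d))) :=
    Submodule.closed_of_finiteDimensional Γ
  have hdpos : 0 < Metric.infDist x₁ (Γ : Set (EuclideanSpace ℝ (Fin d))) := by
    exact (hΓclosed.notMem_iff_infDist_pos ⟨0, Γ.zero_mem⟩).mp hx₁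
  have key : ∀ i, |c| * Metric.infDist x₁ (Γ : Set (EuclideanSpace ℝ (Fin d)))
      ≤ ‖logGrad w x₁ y₁ - logGrad w (xs i) (ys i)‖ := by
    intro i
    set ci : ℝ := sigmoid ((inner ℝ w (xs i) : ℝ)) - ys i
    have hz : (c⁻¹ * ci) • xs i ∈ Γ := Γ.smul_mem _ (hxs i)
    have hdist : Metric.infDist x₁ (Γ : Set (EuclideanSpace ℝ (Fin d)))
        ≤ ‖x₁ - (c⁻¹ * ci) • xs i‖ := by
      simpa [dist_eq_norm] using Metric.infDist_le_dist_of_mem hz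
    have heq : logGrad w x₁ y₁ - logGrad w (xs i) (ys i)
        = c • (x₁ - (c⁻¹ * ci) • xs i) := by
      simp only [logGrad, ← hc, smul_sub, smul_smul]
      congr 1
      field_simp
      rfl
    rw [heq, norm_smul, Real.norm_eq_abs]
    exact mul_le_mul_of_nonneg_left hdist (abs_nonneg c)
  have hpos : 0 < |c| * Metric.infDist x₁ (Γ : Set (EuclideanSpace ℝ (Fin d))) :=
    mul_pos (abs_pos.mpr hc0) hdpos
  refine ⟨key, hpos, fun i h => ?_⟩
  have := key i
  rw [h, sub_self, norm_zero] at this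
  exact absurd (lt_of_lt_of_le hpos this) (lt_irrefl 0)
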